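/- Let H be a Hopf algebra over a commutative ring R. There are R-module homomorphisms i_l : ∫_l → C_{H⊗H}(H), t ↦ (1⊗S)Δ(t) = Σ t₁ ⊗ S(t₂), and p_l : C_{H⊗H}(H) → ∫_l, Σᵢ xᵢ⊗yᵢ ↦ Σᵢ xᵢ ε(yᵢ), satisfying p_l ∘ i_l = id on the module of left integrals ∫_l. Analogously i_r(t) = (S⊗1)Δ(t) and p_r(Σ xᵢ⊗yᵢ) = Σ ε(xᵢ)yᵢ satisfy p_r ∘ i_r = id on right integrals. -/

import Mathlib

universe u v

open TensorProduct

variable {R : Type u} {H : Type v}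

/-- A left integral: `h * t = ε(h) • t` for all `h`. -/
def IsLeftIntegral (R : Type u) {H : Type v} [CommRing R] [Ring H] [HopfAlgebra R H]
    (t : H) : Prop :=
  ∀ h : H, h * t = Coalgebra.counit (R := R) h • t

/-- A right integral: `t * h = ε(h) • t` for all `h`. -/
def IsRightIntegral (R : Type u) {H : Type v} [CommRing R] [Ring H] [HopfAlgebra R H]
    (t : H) : Prop :=
  ∀ h : H, t * h = Coalgebra.counit (R := R) h • t

/-- An `H`-centralising element of `H ⊗ H`: `Σ h·xᵢ ⊗ yᵢ = Σ xᵢ ⊗ yᵢ·h` for all `h`. -/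
def IsCentralising (R : Type u) {H : Type v} [CommRing R] [Ring H] [HopfAlgebra R H]
    (x : H ⊗[R] H) : Prop :=
  ∀ h : H, (h ⊗ₜ[R] (1 : H)) * x = x * ((1 : H) ⊗ₜ[R] h)

/-- `i_l(t) = (1 ⊗ S)Δ(t) = Σ t₁ ⊗ S(t₂)`. -/
noncomputable def iL (R : Type u) {H : Type v} [CommRing R] [Ring H] [HopfAlgebra R H]
    (t : H) : H ⊗[R] H :=
  (HopfAlgebra.antipode (R := R)).lTensor H (Coalgebra.comul t)

/-- `p_l(Σ xᵢ ⊗ yᵢ) = Σ xᵢ ε(yᵢ)`. -/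
noncomputable def pL (R : Type u) {H : Type v} [CommRing R] [Ring H] [HopfAlgebra R H]
    (x : H ⊗[R] H) : H :=
  TensorProduct.rid R H ((Coalgebra.counit (R := R)).lTensor H x)

/-- `i_r(t) = (S ⊗ 1)Δ(t) = Σ S(t₁) ⊗ t₂`. -/
noncomputable def iR (R : Type u) {H : Type v} [CommRing R] [Ring H] [HopfAlgebra R H]
    (t : H) : H ⊗[R] H :=
  (HopfAlgebra.antipode (R := R)).rTensor H (Coalgebra.comul t)

/-- `p_r(Σ xᵢ ⊗ yᵢ) = Σ ε(xᵢ) yᵢ`. -/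
noncomputable def pR (R : Type u) {H : Type v} [CommRing R] [Ring H] [HopfAlgebra R H]
    (x : H ⊗[R] H) : H :=
  TensorProduct.lid R H ((Coalgebra.counit (R := R)).rTensor H x)

section Aux

variable [CommRing R] [Ring H] [HopfAlgebra R H]

open Coalgebra HopfAlgebra LinearMap

/-! ### A hand-rolled convolution algebra on `Hom(H ⊗ H, H)`,
used to prove that the antipode is anti-multiplicative (not available in this
version of Mathlib). -/

/-- The comultiplication on `H ⊗ H` (hand-rolled, universe-polymorphic). -/
noncomputable def comul2 : H ⊗[R] H →ₗ[R] (H ⊗[R] H) ⊗[R] (H ⊗[R] H) :=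
  (TensorProduct.tensorTensorTensorComm R H H H H).toLinearMap ∘ₗ
    TensorProduct.map (Coalgebra.comul) (Coalgebra.comul)

/-- The convolution product on `Hom(H ⊗ H, H)`. -/
noncomputable def conv2 (f g : H ⊗[R] H →ₗ[R] H) : H ⊗[R] H →ₗ[R] H :=
  LinearMap.mul' R H ∘ₗ TensorProduct.map f g ∘ₗ comul2

lemma conv2_apply (f g : H ⊗[R] H →ₗ[R] H) (a b : H) :
    conv2 f g (a ⊗ₜ[R] b) =
      LinearMap.mul' R H (TensorProduct.map f g
        (TensorProduct.tensorTensorTensorComm R H H H H (comul a ⊗ₜ[R] comul b))) := by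
  simp [conv2, comul2]

/-- The convolution unit on `Hom(H ⊗ H, H)`. -/
noncomputable def unit2 : H ⊗[R] H →ₗ[R] H :=
  Algebra.linearMap R H ∘ₗ LinearMap.mul' R R ∘ₗ
    TensorProduct.map (Coalgebra.counit) (Coalgebra.counit)

lemma unit2_apply (a b : H) :
    unit2 (R := R) (a ⊗ₜ[R] b) = algebraMap R H (counit a * counit b) := by
  simp [unit2]

lemma conv2_unit2_right (f : H ⊗[R] H →ₗ[R] H) : conv2 f unit2 = f := by
  apply TensorProduct.ext'
  intro a b
  rw [conv2_apply]
  have key : ∀ x y : H ⊗[R] H,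
      LinearMap.mul' R H (TensorProduct.map f unit2
        (TensorProduct.tensorTensorTensorComm R H H H H (x ⊗ₜ[R] y))) =
      f ((TensorProduct.rid R H ((Coalgebra.counit (R := R)).lTensor H x)) ⊗ₜ[R]
         (TensorProduct.rid R H ((Coalgebra.counit (R := R)).lTensor H y))) := by
    intro x y
    induction x using TensorProduct.induction_on with
    | zero => simp
    | tmul a₁ a₂ =>
      induction y using TensorProduct.induction_on with
      | zero => simp
      | tmul b₁ b₂ =>
        simp only [TensorProduct.tensorTensorTensorComm_tmul, TensorProduct.map_tmul,
          LinearMap.mul'_apply, unit2_apply, LinearMap.lTensor_tmul, TensorProduct.rid_tmul]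
        rw [← TensorProduct.smul_tmul', TensorProduct.tmul_smul, map_smul, map_smul,
          ← Algebra.commutes, ← Algebra.smul_def, mul_smul]
      | add y₁ y₂ h₁ h₂ => simp_all [tmul_add, add_tmul]
    | add x₁ x₂ h₁ h₂ => simp_all [tmul_add, add_tmul]
  rw [key, lTensor_counit_comul, lTensor_counit_comul]
  simp

lemma conv2_unit2_left (g : H ⊗[R] H →ₗ[R] H) : conv2 unit2 g = g := by
  apply TensorProduct.ext'
  intro a b
  rw [conv2_apply]
  have key : ∀ x y : H ⊗[R] H,
      LinearMap.mul' R H (TensorProduct.map unit2 g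
        (TensorProduct.tensorTensorTensorComm R H H H H (x ⊗ₜ[R] y))) =
      g ((TensorProduct.lid R H ((Coalgebra.counit (R := R)).rTensor H x)) ⊗ₜ[R]
         (TensorProduct.lid R H ((Coalgebra.counit (R := R)).rTensor H y))) := by
    intro x y
    induction x using TensorProduct.induction_on with
    | zero => simp
    | tmul a₁ a₂ =>
      induction y using TensorProduct.induction_on with
      | zero => simp
      | tmul b₁ b₂ =>
        simp only [TensorProduct.tensorTensorTensorComm_tmul, TensorProduct.map_tmul,
          LinearMap.mul'_apply, unit2_apply, LinearMap.rTensor_tmul, TensorProduct.lid_tmul]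
        rw [← TensorProduct.smul_tmul', TensorProduct.tmul_smul, map_smul, map_smul,
          ← Algebra.smul_def, mul_smul]
      | add y₁ y₂ h₁ h₂ => simp_all [tmul_add, add_tmul]
    | add x₁ x₂ h₁ h₂ => simp_all [tmul_add, add_tmul]
  rw [key, rTensor_counit_comul, rTensor_counit_comul]
  simp

/-- auxiliary map realising `((a₁⊗a₂)⊗a₃)⊗((b₁⊗b₂)⊗b₃) ↦ (f(a₁⊗b₁)·g(a₂⊗b₂))·k(a₃⊗b₃)`. -/
noncomputable def psiL (f g k : H ⊗[R] H →ₗ[R] H) :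
    ((H ⊗[R] H) ⊗[R] H) ⊗[R] ((H ⊗[R] H) ⊗[R] H) →ₗ[R] H :=
  LinearMap.mul' R H ∘ₗ (LinearMap.mul' R H).rTensor H ∘ₗ
    TensorProduct.map (TensorProduct.map f g) k ∘ₗ
    ((TensorProduct.tensorTensorTensorComm R H H H H).toLinearMap.rTensor (H ⊗[R] H)) ∘ₗ
    (TensorProduct.tensorTensorTensorComm R (H ⊗[R] H) H (H ⊗[R] H) H).toLinearMap

/-- auxiliary map realising `(a₁⊗(a₂⊗a₃))⊗(b₁⊗(b₂⊗b₃)) ↦ f(a₁⊗b₁)·(g(a₂⊗b₂)·k(a₃⊗b₃))`. -/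
noncomputable def psiR (f g k : H ⊗[R] H →ₗ[R] H) :
    (H ⊗[R] (H ⊗[R] H)) ⊗[R] (H ⊗[R] (H ⊗[R] H)) →ₗ[R] H :=
  LinearMap.mul' R H ∘ₗ (LinearMap.mul' R H).lTensor H ∘ₗ
    TensorProduct.map f (TensorProduct.map g k) ∘ₗ
    ((TensorProduct.tensorTensorTensorComm R H H H H).toLinearMap.lTensor (H ⊗[R] H)) ∘ₗ
    (TensorProduct.tensorTensorTensorComm R H (H ⊗[R] H) H (H ⊗[R] H)).toLinearMap

lemma psiL_eq_psiR (f g k : H ⊗[R] H →ₗ[R] H) :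
    psiL f g k = psiR f g k ∘ₗ
      TensorProduct.map (TensorProduct.assoc R H H H).toLinearMap
        (TensorProduct.assoc R H H H).toLinearMap := by
  ext a₁ a₂ a₃ b₁ b₂ b₃
  simp [psiL, psiR, mul_assoc]

lemma claimA (f g k : H ⊗[R] H →ₗ[R] H) : ∀ x y : H ⊗[R] H,
    LinearMap.mul' R H (TensorProduct.map (conv2 f g) k
      (TensorProduct.tensorTensorTensorComm R H H H H (x ⊗ₜ[R] y))) =
    psiL f g k ((Coalgebra.comul.rTensor H x) ⊗ₜ[R] (Coalgebra.comul.rTensor H y)) := by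
  intro x y
  induction x using TensorProduct.induction_on with
  | zero => simp only [TensorProduct.zero_tmul, LinearMap.map_zero, LinearEquiv.map_zero]
  | tmul a₁ a₂ =>
    induction y using TensorProduct.induction_on with
    | zero => simp only [TensorProduct.tmul_zero, LinearMap.map_zero, LinearEquiv.map_zero]
    | tmul b₁ b₂ => simp [psiL, conv2_apply]
    | add y₁ y₂ h₁ h₂ => simp_all [tmul_add, add_tmul]
  | add x₁ x₂ h₁ h₂ => simp_all [tmul_add, add_tmul]

lemma claimB (f g k : H ⊗[R] H →ₗ[R] H) : ∀ x y : H ⊗[R] H,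
    LinearMap.mul' R H (TensorProduct.map f (conv2 g k)
      (TensorProduct.tensorTensorTensorComm R H H H H (x ⊗ₜ[R] y))) =
    psiR f g k ((Coalgebra.comul.lTensor H x) ⊗ₜ[R] (Coalgebra.comul.lTensor H y)) := by
  intro x y
  induction x using TensorProduct.induction_on with
  | zero => simp only [TensorProduct.zero_tmul, LinearMap.map_zero, LinearEquiv.map_zero]
  | tmul a₁ a₂ =>
    induction y using TensorProduct.induction_on with
    | zero => simp only [TensorProduct.tmul_zero, LinearMap.map_zero, LinearEquiv.map_zero]
    | tmul b₁ b₂ => simp [psiR, conv2_apply]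
    | add y₁ y₂ h₁ h₂ => simp_all [tmul_add, add_tmul]
  | add x₁ x₂ h₁ h₂ => simp_all [tmul_add, add_tmul]

lemma conv2_assoc (f g k : H ⊗[R] H →ₗ[R] H) :
    conv2 (conv2 f g) k = conv2 f (conv2 g k) := by
  apply TensorProduct.ext'
  intro a b
  rw [conv2_apply, conv2_apply, claimA, claimB, psiL_eq_psiR]
  simp only [LinearMap.comp_apply, TensorProduct.map_tmul, LinearEquiv.coe_coe]
  rw [coassoc_apply, coassoc_apply]

/-- `F(a ⊗ b) = S b * S a`. -/
noncomputable def Fmap : H ⊗[R] H →ₗ[R] H :=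
  LinearMap.mul' R H ∘ₗ
    TensorProduct.map (HopfAlgebra.antipode (R := R)) (HopfAlgebra.antipode (R := R)) ∘ₗ
    (TensorProduct.comm R H H).toLinearMap

lemma Fmap_apply (a b : H) :
    Fmap (R := R) (a ⊗ₜ[R] b) = antipode (R := R) b * antipode (R := R) a := by
  simp [Fmap]

lemma mulmul_ttt : ∀ x y : H ⊗[R] H,
    TensorProduct.map (LinearMap.mul' R H) (LinearMap.mul' R H)
      (TensorProduct.tensorTensorTensorComm R H H H H (x ⊗ₜ[R] y)) = x * y := by
  intro x y
  induction x using TensorProduct.induction_on with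
  | zero => simp only [TensorProduct.zero_tmul, LinearMap.map_zero, LinearEquiv.map_zero, zero_mul]
  | tmul a₁ a₂ =>
    induction y using TensorProduct.induction_on with
    | zero => simp only [TensorProduct.tmul_zero, LinearMap.map_zero, LinearEquiv.map_zero,
        mul_zero]
    | tmul b₁ b₂ => simp [Algebra.TensorProduct.tmul_mul_tmul]
    | add y₁ y₂ h₁ h₂ => simp_all [tmul_add, mul_add]
  | add x₁ x₂ h₁ h₂ => simp_all [add_tmul, add_mul]

lemma conv2_mul_G : conv2 (LinearMap.mul' R H) (antipode (R := R) ∘ₗ LinearMap.mul' R H)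
    = unit2 := by
  apply TensorProduct.ext'
  intro a b
  rw [conv2_apply, unit2_apply]
  have hmap : TensorProduct.map (LinearMap.mul' R H) (antipode (R := R) ∘ₗ LinearMap.mul' R H)
      = (antipode (R := R)).lTensor H ∘ₗ
        TensorProduct.map (LinearMap.mul' R H) (LinearMap.mul' R H) := by
    apply TensorProduct.ext'; intro u v; simp
  rw [hmap]
  simp only [LinearMap.comp_apply]
  rw [mulmul_ttt, ← Bialgebra.comul_mul, mul_antipode_lTensor_comul_apply, Bialgebra.counit_mul]

lemma conv2_F_mul : conv2 (Fmap (R := R)) (LinearMap.mul' R H) = unit2 := by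
  apply TensorProduct.ext'
  intro a b
  rw [conv2_apply, unit2_apply]
  have step1 : ∀ (x : H ⊗[R] H) (c d : H),
      LinearMap.mul' R H (TensorProduct.map (Fmap (R := R)) (LinearMap.mul' R H)
        (TensorProduct.tensorTensorTensorComm R H H H H (x ⊗ₜ[R] (c ⊗ₜ[R] d)))) =
      antipode (R := R) c * (LinearMap.mul' R H ((antipode (R := R)).rTensor H x)) * d := by
    intro x c d
    induction x using TensorProduct.induction_on with
    | zero => simp only [TensorProduct.zero_tmul, LinearMap.map_zero, LinearEquiv.map_zero,
        mul_zero, zero_mul]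
    | tmul a₁ a₂ => simp [Fmap_apply, mul_assoc]
    | add x₁ x₂ h₁ h₂ => simp_all [add_tmul, mul_add, add_mul]
  have step3 : ∀ (y : H ⊗[R] H),
      LinearMap.mul' R H (TensorProduct.map (Fmap (R := R)) (LinearMap.mul' R H)
        (TensorProduct.tensorTensorTensorComm R H H H H (comul a ⊗ₜ[R] y))) =
      counit (R := R) a • LinearMap.mul' R H ((antipode (R := R)).rTensor H y) := by
    intro y
    induction y using TensorProduct.induction_on with
    | zero => simp only [TensorProduct.tmul_zero, LinearMap.map_zero, LinearEquiv.map_zero,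
        smul_zero]
    | tmul c d =>
      rw [step1, mul_antipode_rTensor_comul_apply]
      simp only [LinearMap.rTensor_tmul, LinearMap.mul'_apply]
      rw [← Algebra.commutes, mul_assoc, ← Algebra.smul_def]
    | add y₁ y₂ h₁ h₂ => simp_all [tmul_add, smul_add]
  rw [step3, mul_antipode_rTensor_comul_apply, Algebra.smul_def, ← map_mul]

/-- The antipode is anti-multiplicative. -/
lemma antipode_mul_antidistrib (a b : H) :
    antipode (R := R) (a * b) = antipode (R := R) b * antipode (R := R) a := by
  have hFG : (Fmap (R := R) : H ⊗[R] H →ₗ[R] H)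
      = antipode (R := R) ∘ₗ LinearMap.mul' R H := by
    calc Fmap (R := R) = conv2 (Fmap (R := R)) unit2 := (conv2_unit2_right _).symm
    _ = conv2 (Fmap (R := R))
          (conv2 (LinearMap.mul' R H) (antipode (R := R) ∘ₗ LinearMap.mul' R H)) := by
        rw [conv2_mul_G]
    _ = conv2 (conv2 (Fmap (R := R)) (LinearMap.mul' R H))
          (antipode (R := R) ∘ₗ LinearMap.mul' R H) := (conv2_assoc _ _ _).symm
    _ = conv2 unit2 (antipode (R := R) ∘ₗ LinearMap.mul' R H) := by rw [conv2_F_mul]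
    _ = antipode (R := R) ∘ₗ LinearMap.mul' R H := conv2_unit2_left _
  have := LinearMap.congr_fun hFG (a ⊗ₜ[R] b)
  simpa [Fmap_apply] using this.symm

/-- The counit is preserved by the antipode. -/
lemma counit_antipode (a : H) :
    counit (R := R) (antipode (R := R) a) = counit (R := R) a := by
  have key : ∀ x : H ⊗[R] H,
      counit (R := R) (LinearMap.mul' R H ((antipode (R := R)).rTensor H x)) =
      counit (R := R) (antipode (R := R)
        (TensorProduct.rid R H ((Coalgebra.counit (R := R)).lTensor H x))) := by
    intro x
    induction x using TensorProduct.induction_on with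
    | zero => simp
    | tmul c d => simp [Bialgebra.counit_mul, mul_comm]
    | add x₁ x₂ h₁ h₂ => simp_all
  have h1 := key (comul a)
  rw [mul_antipode_rTensor_comul_apply, lTensor_counit_comul] at h1
  simpa using h1.symm

end Aux

section Parts

variable [CommRing R] [Ring H] [HopfAlgebra R H]

open Coalgebra HopfAlgebra LinearMap

lemma pL_mulLeft (h : H) (x : H ⊗[R] H) : pL R ((h ⊗ₜ[R] (1 : H)) * x) = h * pL R x := by
  induction x using TensorProduct.induction_on with
  | zero => simp [pL]
  | tmul a b => simp [pL, mul_smul_comm]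
  | add x₁ x₂ h₁ h₂ => simp_all [pL, mul_add]

lemma pL_mulRight (h : H) (x : H ⊗[R] H) :
    pL R (x * ((1 : H) ⊗ₜ[R] h)) = counit (R := R) h • pL R x := by
  induction x using TensorProduct.induction_on with
  | zero => simp [pL]
  | tmul a b => simp [pL, Bialgebra.counit_mul, mul_comm, mul_smul]
  | add x₁ x₂ h₁ h₂ => simp_all [pL, add_mul, smul_add]

lemma pR_mulLeft (h : H) (x : H ⊗[R] H) :
    pR R ((h ⊗ₜ[R] (1 : H)) * x) = counit (R := R) h • pR R x := by
  induction x using TensorProduct.induction_on with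
  | zero => simp [pR]
  | tmul a b => simp [pR, Bialgebra.counit_mul, mul_smul]
  | add x₁ x₂ h₁ h₂ => simp_all [pR, mul_add, smul_add]

lemma pR_mulRight (h : H) (x : H ⊗[R] H) : pR R (x * ((1 : H) ⊗ₜ[R] h)) = pR R x * h := by
  induction x using TensorProduct.induction_on with
  | zero => simp [pR]
  | tmul a b => simp [pR, smul_mul_assoc]
  | add x₁ x₂ h₁ h₂ => simp_all [pR, add_mul]

lemma pL_centralising (x : H ⊗[R] H) (hx : IsCentralising R x) : IsLeftIntegral R (pL R x) := by
  intro h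
  rw [← pL_mulLeft, hx h, pL_mulRight]

lemma pR_centralising (x : H ⊗[R] H) (hx : IsCentralising R x) : IsRightIntegral R (pR R x) := by
  intro h
  rw [← pR_mulRight, ← hx h, pR_mulLeft]

lemma pL_iL (t : H) : pL R (iL R t) = t := by
  unfold pL iL
  rw [← LinearMap.comp_apply, ← LinearMap.lTensor_comp]
  have hcs : (Coalgebra.counit ∘ₗ HopfAlgebra.antipode (R := R) : H →ₗ[R] R)
      = Coalgebra.counit := LinearMap.ext fun a => _root_.counit_antipode a
  rw [hcs, lTensor_counit_comul]
  simp

lemma pR_iR (t : H) : pR R (iR R t) = t := by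
  unfold pR iR
  rw [← LinearMap.comp_apply, ← LinearMap.rTensor_comp]
  have hcs : (Coalgebra.counit ∘ₗ HopfAlgebra.antipode (R := R) : H →ₗ[R] R)
      = Coalgebra.counit := LinearMap.ext fun a => _root_.counit_antipode a
  rw [hcs, rTensor_counit_comul]
  simp

end Parts

section Hard

variable [CommRing R] [Ring H] [HopfAlgebra R H]

open Coalgebra HopfAlgebra LinearMap

lemma iL_def (t : H) :
    (HopfAlgebra.antipode (R := R)).lTensor H (Coalgebra.comul t) = iL R t := rfl

lemma iR_def (t : H) :
    (HopfAlgebra.antipode (R := R)).rTensor H (Coalgebra.comul t) = iR R t := rfl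

/-- `a ↦ a ⊗ₜ 1`. -/
noncomputable def mkL : H →ₗ[R] H ⊗[R] H := (TensorProduct.mk R H H).flip 1

/-- `b ↦ 1 ⊗ₜ b`. -/
noncomputable def mkR' : H →ₗ[R] H ⊗[R] H := TensorProduct.mk R H H 1

@[simp] lemma mkL_apply (a : H) : mkL (R := R) a = a ⊗ₜ[R] (1 : H) := rfl
@[simp] lemma mkR'_apply (b : H) : mkR' (R := R) b = (1 : H) ⊗ₜ[R] b := rfl

/-- `a ⊗ b ↦ (a ⊗ 1) * x₀ * (1 ⊗ S b)`. -/
noncomputable def gammaL (x₀ : H ⊗[R] H) : H ⊗[R] H →ₗ[R] H ⊗[R] H :=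
  LinearMap.mul' R (H ⊗[R] H) ∘ₗ TensorProduct.map
    (LinearMap.mulRight R x₀ ∘ₗ mkL) (mkR' ∘ₗ HopfAlgebra.antipode (R := R))

@[simp] lemma gammaL_tmul (x₀ : H ⊗[R] H) (a b : H) :
    gammaL x₀ (a ⊗ₜ[R] b) =
      (a ⊗ₜ[R] (1 : H)) * x₀ * ((1 : H) ⊗ₜ[R] antipode (R := R) b) := by
  simp [gammaL]

/-- `c ⊗ d ↦ (S c ⊗ 1) * x₀ * (1 ⊗ d)`. -/
noncomputable def gammaR (x₀ : H ⊗[R] H) : H ⊗[R] H →ₗ[R] H ⊗[R] H :=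
  LinearMap.mul' R (H ⊗[R] H) ∘ₗ TensorProduct.map
    (LinearMap.mulRight R x₀ ∘ₗ mkL ∘ₗ HopfAlgebra.antipode (R := R)) mkR'

@[simp] lemma gammaR_tmul (x₀ : H ⊗[R] H) (c d : H) :
    gammaR x₀ (c ⊗ₜ[R] d) =
      ((antipode (R := R) c) ⊗ₜ[R] (1 : H)) * x₀ * ((1 : H) ⊗ₜ[R] d) := by
  simp [gammaR]

/-- `a ⊗ b ↦ iL(a·t) · (1 ⊗ b)`. -/
noncomputable def deltaL (t : H) : H ⊗[R] H →ₗ[R] H ⊗[R] H :=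
  LinearMap.mul' R (H ⊗[R] H) ∘ₗ TensorProduct.map
    ((HopfAlgebra.antipode (R := R)).lTensor H ∘ₗ Coalgebra.comul ∘ₗ LinearMap.mulRight R t) mkR'

@[simp] lemma deltaL_tmul (t a b : H) :
    deltaL t (a ⊗ₜ[R] b) =
      ((HopfAlgebra.antipode (R := R)).lTensor H (Coalgebra.comul (a * t))) *
        ((1 : H) ⊗ₜ[R] b) := by
  simp [deltaL]

/-- `a ⊗ b ↦ (a ⊗ 1) · iR(t·b)`. -/
noncomputable def deltaR (t : H) : H ⊗[R] H →ₗ[R] H ⊗[R] H :=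
  LinearMap.mul' R (H ⊗[R] H) ∘ₗ TensorProduct.map mkL
    ((HopfAlgebra.antipode (R := R)).rTensor H ∘ₗ Coalgebra.comul ∘ₗ LinearMap.mulLeft R t)

@[simp] lemma deltaR_tmul (t a b : H) :
    deltaR t (a ⊗ₜ[R] b) =
      (a ⊗ₜ[R] (1 : H)) *
        ((HopfAlgebra.antipode (R := R)).rTensor H (Coalgebra.comul (t * b))) := by
  simp [deltaR]

noncomputable def TL (x₀ : H ⊗[R] H) : (H ⊗[R] H) ⊗[R] H →ₗ[R] H ⊗[R] H :=
  LinearMap.mul' R (H ⊗[R] H) ∘ₗ TensorProduct.map (gammaL x₀) mkR'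

@[simp] lemma TL_tmul (x₀ u : H ⊗[R] H) (c : H) :
    TL x₀ (u ⊗ₜ[R] c) = gammaL x₀ u * ((1 : H) ⊗ₜ[R] c) := by
  simp [TL]

noncomputable def TR (x₀ : H ⊗[R] H) : H ⊗[R] (H ⊗[R] H) →ₗ[R] H ⊗[R] H :=
  LinearMap.mul' R (H ⊗[R] H) ∘ₗ TensorProduct.map mkL (gammaR x₀)

@[simp] lemma TR_tmul (x₀ : H ⊗[R] H) (a : H) (v : H ⊗[R] H) :
    TR x₀ (a ⊗ₜ[R] v) = (a ⊗ₜ[R] (1 : H)) * gammaR x₀ v := by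
  simp [TR]

noncomputable def UL (x₀ : H ⊗[R] H) : H ⊗[R] (H ⊗[R] H) →ₗ[R] H ⊗[R] H :=
  LinearMap.mul' R (H ⊗[R] H) ∘ₗ TensorProduct.map
    (LinearMap.mulRight R x₀ ∘ₗ mkL)
    (mkR' ∘ₗ LinearMap.mul' R H ∘ₗ (HopfAlgebra.antipode (R := R)).rTensor H)

@[simp] lemma UL_tmul (x₀ : H ⊗[R] H) (a : H) (y : H ⊗[R] H) :
    UL x₀ (a ⊗ₜ[R] y) =
      (a ⊗ₜ[R] (1 : H)) * x₀ *
        ((1 : H) ⊗ₜ[R] (LinearMap.mul' R H ((HopfAlgebra.antipode (R := R)).rTensor H y))) := by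
  simp [UL]

noncomputable def UR (x₀ : H ⊗[R] H) : (H ⊗[R] H) ⊗[R] H →ₗ[R] H ⊗[R] H :=
  LinearMap.mul' R (H ⊗[R] H) ∘ₗ TensorProduct.map
    (LinearMap.mulRight R x₀ ∘ₗ mkL ∘ₗ LinearMap.mul' R H ∘ₗ
      (HopfAlgebra.antipode (R := R)).lTensor H) mkR'

@[simp] lemma UR_tmul (x₀ y : H ⊗[R] H) (c : H) :
    UR x₀ (y ⊗ₜ[R] c) =
      ((LinearMap.mul' R H ((HopfAlgebra.antipode (R := R)).lTensor H y)) ⊗ₜ[R] (1 : H)) * x₀ *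
        ((1 : H) ⊗ₜ[R] c) := by
  simp [UR]

noncomputable def DL (x₀ : H ⊗[R] H) : H ⊗[R] H →ₗ[R] H ⊗[R] H :=
  LinearMap.mul' R (H ⊗[R] H) ∘ₗ TensorProduct.map
    (LinearMap.mulRight R x₀ ∘ₗ mkL)
    (Algebra.linearMap R (H ⊗[R] H) ∘ₗ (Coalgebra.counit (R := R) : H →ₗ[R] R))

@[simp] lemma DL_tmul (x₀ : H ⊗[R] H) (a b : H) :
    DL x₀ (a ⊗ₜ[R] b) =
      (a ⊗ₜ[R] (1 : H)) * x₀ * algebraMap R (H ⊗[R] H) (counit (R := R) b) := by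
  simp [DL]

noncomputable def DR (x₀ : H ⊗[R] H) : H ⊗[R] H →ₗ[R] H ⊗[R] H :=
  LinearMap.mul' R (H ⊗[R] H) ∘ₗ TensorProduct.map
    (Algebra.linearMap R (H ⊗[R] H) ∘ₗ (Coalgebra.counit (R := R) : H →ₗ[R] R))
    (LinearMap.mulLeft R x₀ ∘ₗ mkR')

@[simp] lemma DR_tmul (x₀ : H ⊗[R] H) (a b : H) :
    DR x₀ (a ⊗ₜ[R] b) =
      algebraMap R (H ⊗[R] H) (counit (R := R) a) * (x₀ * ((1 : H) ⊗ₜ[R] b)) := by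
  simp [DR]

lemma one_tmul_algebraMap (r : R) :
    ((1 : H) ⊗ₜ[R] (algebraMap R H r)) = algebraMap R (H ⊗[R] H) r := by
  rw [Algebra.algebraMap_eq_smul_one, Algebra.algebraMap_eq_smul_one (A := H ⊗[R] H),
    TensorProduct.tmul_smul, ← Algebra.TensorProduct.one_def]

lemma algebraMap_tmul_one (r : R) :
    ((algebraMap R H r) ⊗ₜ[R] (1 : H)) = algebraMap R (H ⊗[R] H) r := by
  rw [Algebra.algebraMap_eq_smul_one, Algebra.algebraMap_eq_smul_one (A := H ⊗[R] H),
    ← TensorProduct.smul_tmul', ← Algebra.TensorProduct.one_def]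

lemma iL_centralising (t : H) (ht : IsLeftIntegral R t) : IsCentralising R (iL R t) := by
  have key_S : ∀ (a b : H) (z : H ⊗[R] H),
      (antipode (R := R)).lTensor H ((a ⊗ₜ[R] b) * z) =
      (a ⊗ₜ[R] (1 : H)) * ((antipode (R := R)).lTensor H z) *
        ((1 : H) ⊗ₜ[R] antipode (R := R) b) := by
    intro a b z
    induction z using TensorProduct.induction_on with
    | zero => simp
    | tmul c d =>
      simp [Algebra.TensorProduct.tmul_mul_tmul, _root_.antipode_mul_antidistrib]
    | add z₁ z₂ h₁ h₂ => simp_all [mul_add, add_mul]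
  intro h
  have E1 : deltaL t (comul h) = iL R t * ((1 : H) ⊗ₜ[R] h) := by
    have e1 : deltaL t = LinearMap.mulLeft R (iL R t) ∘ₗ mkR' ∘ₗ
        (TensorProduct.lid R H).toLinearMap ∘ₗ (Coalgebra.counit (R := R)).rTensor H := by
      apply TensorProduct.ext'
      intro a b
      simp only [deltaL_tmul, LinearMap.comp_apply, LinearMap.rTensor_tmul,
        LinearEquiv.coe_coe, TensorProduct.lid_tmul, mkR'_apply, LinearMap.mulLeft_apply]
      rw [ht a, map_smul, map_smul, iL_def, smul_mul_assoc, TensorProduct.tmul_smul,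
        mul_smul_comm]
    rw [e1]
    simp only [LinearMap.comp_apply, LinearEquiv.coe_coe]
    rw [rTensor_counit_comul]
    simp
  have keyγ : ∀ y : H ⊗[R] H,
      (antipode (R := R)).lTensor H (y * comul t) = gammaL (iL R t) y := by
    intro y
    induction y using TensorProduct.induction_on with
    | zero => simp
    | tmul a b => rw [key_S, iL_def, gammaL_tmul]
    | add y₁ y₂ h₁ h₂ => simp_all [add_mul]
  have e2 : deltaL t = TL (iL R t) ∘ₗ Coalgebra.comul.rTensor H := by
    apply TensorProduct.ext'
    intro a b
    simp only [deltaL_tmul, LinearMap.comp_apply, LinearMap.rTensor_tmul, TL_tmul]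
    rw [Bialgebra.comul_mul, keyγ]
  have e3 : TL (iL R t) ∘ₗ ((TensorProduct.assoc R H H H).symm : _ ≃ₗ[R] _).toLinearMap
      = UL (iL R t) := by
    apply TensorProduct.ext'
    intro a w
    induction w using TensorProduct.induction_on with
    | zero => simp only [TensorProduct.tmul_zero, LinearMap.map_zero]
    | tmul b c =>
      simp only [LinearMap.comp_apply, LinearEquiv.coe_coe, TensorProduct.assoc_symm_tmul,
        TL_tmul, gammaL_tmul, UL_tmul, LinearMap.rTensor_tmul, LinearMap.mul'_apply]
      rw [mul_assoc, Algebra.TensorProduct.tmul_mul_tmul, one_mul]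
    | add w₁ w₂ h₁ h₂ =>
      simp only [TensorProduct.tmul_add, LinearMap.map_add, h₁, h₂]
  have e4 : UL (iL R t) ∘ₗ Coalgebra.comul.lTensor H = DL (iL R t) := by
    apply TensorProduct.ext'
    intro a b
    simp only [LinearMap.comp_apply, LinearMap.lTensor_tmul, UL_tmul, DL_tmul]
    rw [mul_antipode_rTensor_comul_apply, one_tmul_algebraMap]
  have E5 : DL (iL R t) (comul h) = (h ⊗ₜ[R] (1 : H)) * iL R t := by
    have e5 : DL (iL R t) = LinearMap.mulRight R (iL R t) ∘ₗ mkL ∘ₗ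
        (TensorProduct.rid R H).toLinearMap ∘ₗ (Coalgebra.counit (R := R)).lTensor H := by
      apply TensorProduct.ext'
      intro a b
      simp only [DL_tmul, LinearMap.comp_apply, LinearMap.lTensor_tmul,
        LinearEquiv.coe_coe, TensorProduct.rid_tmul, mkL_apply, LinearMap.mulRight_apply]
      rw [← Algebra.commutes, ← Algebra.smul_def, ← TensorProduct.smul_tmul', smul_mul_assoc]
    rw [e5]
    simp only [LinearMap.comp_apply, LinearEquiv.coe_coe]
    rw [lTensor_counit_comul]
    simp
  calc (h ⊗ₜ[R] (1 : H)) * iL R t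
      = DL (iL R t) (comul h) := E5.symm
    _ = UL (iL R t) (Coalgebra.comul.lTensor H (comul h)) := by rw [← e4]; rfl
    _ = TL (iL R t) ((TensorProduct.assoc R H H H).symm
          (Coalgebra.comul.lTensor H (comul h))) := by rw [← e3]; rfl
    _ = TL (iL R t) (Coalgebra.comul.rTensor H (comul h)) := by rw [coassoc_symm_apply]
    _ = deltaL t (comul h) := by rw [e2]; rfl
    _ = iL R t * ((1 : H) ⊗ₜ[R] h) := E1

lemma iR_centralising (t : H) (ht : IsRightIntegral R t) : IsCentralising R (iR R t) := by
  have key_S : ∀ (a b : H) (z : H ⊗[R] H),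
      (antipode (R := R)).rTensor H (z * (a ⊗ₜ[R] b)) =
      ((antipode (R := R) a) ⊗ₜ[R] (1 : H)) * ((antipode (R := R)).rTensor H z) *
        ((1 : H) ⊗ₜ[R] b) := by
    intro a b z
    induction z using TensorProduct.induction_on with
    | zero => simp
    | tmul c d =>
      simp [Algebra.TensorProduct.tmul_mul_tmul, _root_.antipode_mul_antidistrib]
    | add z₁ z₂ h₁ h₂ => simp_all [mul_add, add_mul]
  intro h
  have E1 : deltaR t (comul h) = (h ⊗ₜ[R] (1 : H)) * iR R t := by
    have e1 : deltaR t = LinearMap.mulRight R (iR R t) ∘ₗ mkL ∘ₗ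
        (TensorProduct.rid R H).toLinearMap ∘ₗ (Coalgebra.counit (R := R)).lTensor H := by
      apply TensorProduct.ext'
      intro a b
      simp only [deltaR_tmul, LinearMap.comp_apply, LinearMap.lTensor_tmul,
        LinearEquiv.coe_coe, TensorProduct.rid_tmul, mkL_apply, LinearMap.mulRight_apply]
      rw [ht b, map_smul, map_smul, iR_def, mul_smul_comm, ← TensorProduct.smul_tmul',
        smul_mul_assoc]
    rw [e1]
    simp only [LinearMap.comp_apply, LinearEquiv.coe_coe]
    rw [lTensor_counit_comul]
    simp
  have keyγ : ∀ y : H ⊗[R] H,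
      (antipode (R := R)).rTensor H (comul t * y) = gammaR (iR R t) y := by
    intro y
    induction y using TensorProduct.induction_on with
    | zero => simp
    | tmul a b => rw [key_S, iR_def, gammaR_tmul]
    | add y₁ y₂ h₁ h₂ => simp_all [mul_add]
  have e2 : deltaR t = TR (iR R t) ∘ₗ Coalgebra.comul.lTensor H := by
    apply TensorProduct.ext'
    intro a b
    simp only [deltaR_tmul, LinearMap.comp_apply, LinearMap.lTensor_tmul, TR_tmul]
    rw [Bialgebra.comul_mul, keyγ]
  have e3 : TR (iR R t) ∘ₗ ((TensorProduct.assoc R H H H) : _ ≃ₗ[R] _).toLinearMap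
      = UR (iR R t) := by
    apply TensorProduct.ext_threefold
    intro a b c
    simp only [LinearMap.comp_apply, LinearEquiv.coe_coe, TensorProduct.assoc_tmul,
      TR_tmul, gammaR_tmul, UR_tmul, LinearMap.lTensor_tmul, LinearMap.mul'_apply]
    rw [← mul_assoc, ← mul_assoc, Algebra.TensorProduct.tmul_mul_tmul, mul_one]
  have e4 : UR (iR R t) ∘ₗ Coalgebra.comul.rTensor H = DR (iR R t) := by
    apply TensorProduct.ext'
    intro a b
    simp only [LinearMap.comp_apply, LinearMap.rTensor_tmul, UR_tmul, DR_tmul]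
    rw [mul_antipode_lTensor_comul_apply, algebraMap_tmul_one, mul_assoc]
  have E5 : DR (iR R t) (comul h) = iR R t * ((1 : H) ⊗ₜ[R] h) := by
    have e5 : DR (iR R t) = LinearMap.mulLeft R (iR R t) ∘ₗ mkR' ∘ₗ
        (TensorProduct.lid R H).toLinearMap ∘ₗ (Coalgebra.counit (R := R)).rTensor H := by
      apply TensorProduct.ext'
      intro a b
      simp only [DR_tmul, LinearMap.comp_apply, LinearMap.rTensor_tmul,
        LinearEquiv.coe_coe, TensorProduct.lid_tmul, mkR'_apply, LinearMap.mulLeft_apply]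
      rw [← Algebra.smul_def, TensorProduct.tmul_smul, mul_smul_comm]
    rw [e5]
    simp only [LinearMap.comp_apply, LinearEquiv.coe_coe]
    rw [rTensor_counit_comul]
    simp
  calc (h ⊗ₜ[R] (1 : H)) * iR R t
      = deltaR t (comul h) := E1.symm
    _ = TR (iR R t) (Coalgebra.comul.lTensor H (comul h)) := by rw [e2]; rfl
    _ = TR (iR R t) ((TensorProduct.assoc R H H H)
          (Coalgebra.comul.rTensor H (comul h))) := by rw [coassoc_apply]
    _ = UR (iR R t) (Coalgebra.comul.rTensor H (comul h)) := by rw [← e3]; rfl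
    _ = DR (iR R t) (comul h) := by rw [← e4]; rfl
    _ = iR R t * ((1 : H) ⊗ₜ[R] h) := E5

end Hard

/-- The correspondence between (left/right) integrals and `H`-centralising elements of
`H ⊗ H`: `i_l` maps left integrals to centralising elements, `p_l` maps centralising elements
to left integrals, and `p_l ∘ i_l = id` on left integrals; analogously for `i_r`, `p_r` and
right integrals. -/
theorem integral_centralising_correspondence (R : Type u) (H : Type v) [CommRing R] [Ring H]
    [HopfAlgebra R H] :
    (∀ t : H, IsLeftIntegral R t → IsCentralising R (iL R t)) ∧
    (∀ x : H ⊗[R] H, IsCentralising R x → IsLeftIntegral R (pL R x)) ∧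
    (∀ t : H, IsLeftIntegral R t → pL R (iL R t) = t) ∧
    (∀ t : H, IsRightIntegral R t → IsCentralising R (iR R t)) ∧
    (∀ x : H ⊗[R] H, IsCentralising R x → IsRightIntegral R (pR R x)) ∧
    (∀ t : H, IsRightIntegral R t → pR R (iR R t) = t) :=
  ⟨iL_centralising, pL_centralising, fun t _ => pL_iL t,
   iR_centralising, pR_centralising, fun t _ => pR_iR t⟩
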